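/- Let a > 0 and let M : ℕ → ℝ be a positive sequence satisfying (M.4)_a, i.e., the sequence p ↦ m p^a / p (where m p = M p / M(p-1)) is almost non-decreasing: there is C > 0 with m p^a / p ≤ C · m q^a / q whenever 1 ≤ p ≤ q. Suppose moreover that m p^a / p is actually non-decreasing. Then either (p!)^(1/a) ≺ M (i.e., for every L > 0 there is C > 0 with (p!)^(1/a) ≤ C L^p M p for all p), or (p!)^(1/a) ≍ M (i.e., both (p!)^(1/a) ⊂ M and M ⊂ (p!)^(1/a)). -/

import Mathlib

open Finset

/-- Let `a > 0` and let `M` be a positive sequence satisfying `(M.4)_a`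
(the sequence `p ↦ m_p^a / p`, where `m_p = M p / M (p-1)`, is almost
non-decreasing), and suppose moreover that `p ↦ m_p^a / p` is actually
non-decreasing.  Then either `(p!)^(1/a) ≺ M` or `(p!)^(1/a) ≍ M`. -/
theorem gevrey_prec_or_equiv (a : ℝ) (ha : 0 < a) (M : ℕ → ℝ)
    (hpos : ∀ p, 0 < M p)
    (halmost : ∃ C : ℝ, 0 < C ∧ ∀ p q : ℕ, 1 ≤ p → p ≤ q →
      (M p / M (p - 1)) ^ a / (p : ℝ) ≤ C * ((M q / M (q - 1)) ^ a / (q : ℝ)))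
    (hmono : ∀ p q : ℕ, 1 ≤ p → p ≤ q →
      (M p / M (p - 1)) ^ a / (p : ℝ) ≤ (M q / M (q - 1)) ^ a / (q : ℝ)) :
    (∀ L : ℝ, 0 < L → ∃ C : ℝ, 0 < C ∧
        ∀ p : ℕ, (p.factorial : ℝ) ^ (1 / a) ≤ C * L ^ p * M p) ∨
    ((∃ C L : ℝ, 0 < C ∧ 0 < L ∧
        ∀ p : ℕ, (p.factorial : ℝ) ^ (1 / a) ≤ C * L ^ p * M p) ∧
     (∃ C L : ℝ, 0 < C ∧ 0 < L ∧
        ∀ p : ℕ, M p ≤ C * L ^ p * (p.factorial : ℝ) ^ (1 / a))) := by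
  classical
  have hane : a ≠ 0 := ha.ne'
  set m : ℕ → ℝ := fun k => M k / M (k - 1) with hm_def
  have hm_pos : ∀ k, 0 < m k := fun k => div_pos (hpos k) (hpos (k - 1))
  set c : ℕ → ℝ := fun k => m k / (k : ℝ) ^ (1 / a) with hc_def
  have hc_pos : ∀ k, 1 ≤ k → 0 < c k := by
    intro k hk
    have hk0 : (0:ℝ) < (k:ℝ) := by exact_mod_cast hk
    exact div_pos (hm_pos k) (Real.rpow_pos_of_pos hk0 _)
  have hc_eq : ∀ k : ℕ, 1 ≤ k → c k = (m k ^ a / (k : ℝ)) ^ (1 / a) := by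
    intro k hk
    have hk0 : (0:ℝ) < (k:ℝ) := by exact_mod_cast hk
    have hma : (0:ℝ) ≤ m k ^ a := (Real.rpow_pos_of_pos (hm_pos k) a).le
    rw [Real.div_rpow hma hk0.le, ← Real.rpow_mul (hm_pos k).le,
      mul_one_div_cancel hane, Real.rpow_one]
  have hc_mono : ∀ p q : ℕ, 1 ≤ p → p ≤ q → c p ≤ c q := by
    intro p q hp hpq
    rw [hc_eq p hp, hc_eq q (hp.trans hpq)]
    have h1 : (0:ℝ) ≤ m p ^ a / (p:ℝ) :=
      div_nonneg (Real.rpow_pos_of_pos (hm_pos p) a).le (Nat.cast_nonneg p)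
    exact Real.rpow_le_rpow h1 (hmono p q hp hpq) (by positivity)
  have hMprod : ∀ p : ℕ, M p = M 0 * ∏ k ∈ Icc 1 p, m k := by
    intro p
    induction p with
    | zero => simp
    | succ n ih =>
      rw [Finset.prod_Icc_succ_top (Nat.le_add_left 1 n), ← mul_assoc, ← ih]
      have hmn : m (n+1) = M (n+1) / M n := by simp [hm_def]
      rw [hmn, eq_comm, mul_comm, div_mul_cancel₀ _ (hpos n).ne']
  have hfact : ∀ p : ℕ, ((p.factorial : ℝ)) ^ (1/a) = ∏ k ∈ Icc 1 p, (k:ℝ) ^ (1/a) := by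
    intro p
    rw [Real.finset_prod_rpow _ _ (fun i _ => Nat.cast_nonneg i)]
    congr 1
    have h1 : (∏ k ∈ Icc 1 p, k) = p.factorial := by
      rw [← Finset.Ico_add_one_right_eq_Icc]; exact Finset.prod_Ico_id_eq_factorial p
    rw [← h1]; push_cast; ring
  have hsplit : ∀ p : ℕ, M p = M 0 * (∏ k ∈ Icc 1 p, c k) * (p.factorial : ℝ) ^ (1/a) := by
    intro p
    rw [hfact p, hMprod p, mul_assoc, ← Finset.prod_mul_distrib]
    congr 1
    apply Finset.prod_congr rfl
    intro k hk
    have hk1 : 1 ≤ k := (Finset.mem_Icc.mp hk).1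
    have hk0 : (0:ℝ) < (k:ℝ)^(1/a) :=
      Real.rpow_pos_of_pos (by exact_mod_cast hk1) _
    simp only [hc_def]
    exact (div_mul_cancel₀ _ hk0.ne').symm
  have hFpos : ∀ p : ℕ, (0:ℝ) < (p.factorial : ℝ) ^ (1/a) := by
    intro p
    exact Real.rpow_pos_of_pos (by exact_mod_cast p.factorial_pos) _
  by_cases hb : ∃ B : ℝ, ∀ k, 1 ≤ k → c k ≤ B
  · right
    obtain ⟨B, hB⟩ := hb
    have hc1 : 0 < c 1 := hc_pos 1 le_rfl
    have hBpos : 0 < B := hc1.trans_le (hB 1 le_rfl)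
    have hM0 : (0:ℝ) < M 0 := hpos 0
    constructor
    · refine ⟨1 / M 0, 1 / c 1, by positivity, by positivity, fun p => ?_⟩
      have hprod_lb : (c 1)^p ≤ ∏ k ∈ Icc 1 p, c k := by
        have h := Finset.prod_le_prod (s := Icc 1 p) (f := fun _ : ℕ => c 1) (g := c)
          (fun i _ => hc1.le)
          (fun i hi => hc_mono 1 i le_rfl (Finset.mem_Icc.mp hi).1)
        simpa [Finset.prod_const, Nat.card_Icc] using h
      have h0 : M 0 ≠ 0 := hM0.ne'
      have h1 : c 1 ≠ 0 := hc1.ne'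
      calc (p.factorial : ℝ)^(1/a) = 1 * (p.factorial : ℝ)^(1/a) := (one_mul _).symm
        _ ≤ ((∏ k ∈ Icc 1 p, c k) / (c 1)^p) * (p.factorial : ℝ)^(1/a) := by
            apply mul_le_mul_of_nonneg_right _ (hFpos p).le
            rw [le_div_iff₀ (by positivity)]
            simpa using hprod_lb
        _ = (1 / M 0) * (1 / c 1)^p * (M 0 * (∏ k ∈ Icc 1 p, c k) * (p.factorial:ℝ)^(1/a)) := by
            field_simp
            rw [mul_assoc, ← mul_pow, mul_one_div_cancel h1, one_pow, mul_one]
        _ = (1 / M 0) * (1 / c 1)^p * M p := by rw [← hsplit p]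
    · refine ⟨M 0, B, hM0, hBpos, fun p => ?_⟩
      have hprod_ub : ∏ k ∈ Icc 1 p, c k ≤ B^p := by
        have h := Finset.prod_le_prod (s := Icc 1 p) (f := c) (g := fun _ : ℕ => B)
          (fun i hi => (hc_pos i (Finset.mem_Icc.mp hi).1).le)
          (fun i hi => hB i (Finset.mem_Icc.mp hi).1)
        simpa [Finset.prod_const, Nat.card_Icc] using h
      rw [hsplit p]
      apply mul_le_mul_of_nonneg_right _ (hFpos p).le
      exact mul_le_mul_of_nonneg_left hprod_ub hM0.le
  · left
    push_neg at hb
    intro L hL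
    obtain ⟨N, hN1, hNc⟩ := hb (1/L)
    have hLc : ∀ k, N ≤ k → 1 ≤ L * c k := by
      intro k hk
      have h2 : 1/L < c k := lt_of_lt_of_le hNc (hc_mono N k hN1 hk)
      have h3 := (div_lt_iff₀ hL).mp h2
      linarith
    have hkey : ∀ p, N ≤ p →
        (p.factorial : ℝ)^(1/a) * (L^N * M N) ≤ (N.factorial : ℝ)^(1/a) * (L^p * M p) := by
      intro p hp
      induction p, hp using Nat.le_induction with
      | base => exact le_rfl
      | succ n hn ih =>
        have hn1 : 1 ≤ n + 1 := Nat.le_add_left 1 n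
        have hk : (0:ℝ) < ((n+1:ℕ):ℝ)^(1/a) :=
          Real.rpow_pos_of_pos (by exact_mod_cast hn1) _
        have hstep : M (n+1) = c (n+1) * ((n+1:ℕ):ℝ)^(1/a) * M n := by
          have h1 : m (n+1) = M (n+1) / M n := by simp [hm_def]
          have h2 : c (n+1) * ((n+1:ℕ):ℝ)^(1/a) = m (n+1) := by
            simp only [hc_def]
            exact div_mul_cancel₀ _ hk.ne'
          rw [h2, h1, div_mul_cancel₀ _ (hpos n).ne']
        have hfs : ((n+1).factorial : ℝ)^(1/a) = ((n+1:ℕ):ℝ)^(1/a) * (n.factorial : ℝ)^(1/a) := by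
          rw [← Real.mul_rpow (by positivity) (by positivity)]
          congr 1
          push_cast [Nat.factorial_succ]
          ring
        have h1L : 1 ≤ L * c (n+1) := hLc (n+1) (hn.trans (Nat.le_succ n))
        have hX : (0:ℝ) ≤ ((n+1:ℕ):ℝ)^(1/a) * ((N.factorial:ℝ)^(1/a) * (L^n * M n)) :=
          mul_nonneg hk.le (mul_nonneg (hFpos N).le
            (mul_nonneg (pow_nonneg hL.le n) (hpos n).le))
        calc ((n+1).factorial : ℝ)^(1/a) * (L^N * M N)
            = ((n+1:ℕ):ℝ)^(1/a) * ((n.factorial : ℝ)^(1/a) * (L^N * M N)) := by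
              rw [hfs]; ring
          _ ≤ ((n+1:ℕ):ℝ)^(1/a) * ((N.factorial : ℝ)^(1/a) * (L^n * M n)) :=
              mul_le_mul_of_nonneg_left ih hk.le
          _ ≤ (L * c (n+1)) * (((n+1:ℕ):ℝ)^(1/a) * ((N.factorial:ℝ)^(1/a) * (L^n * M n))) :=
              le_mul_of_one_le_left hX h1L
          _ = (N.factorial : ℝ)^(1/a) * (L^(n+1) * M (n+1)) := by
              rw [hstep]; ring
    set C' : ℝ := (N.factorial : ℝ)^(1/a) / (L^N * M N) with hC'_def
    have hD : (0:ℝ) < L^N * M N := mul_pos (pow_pos hL N) (hpos N)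
    have hC' : 0 < C' := div_pos (hFpos N) hD
    set S : ℝ := ∑ q ∈ Finset.range N, (q.factorial:ℝ)^(1/a) / (L^q * M q) with hS_def
    have hSnn : 0 ≤ S := Finset.sum_nonneg fun q _ =>
      div_nonneg (hFpos q).le (mul_pos (pow_pos hL q) (hpos q)).le
    refine ⟨C' + S, by linarith, fun p => ?_⟩
    have hDp : (0:ℝ) < L^p * M p := mul_pos (pow_pos hL p) (hpos p)
    rcases le_or_gt N p with hNp | hNp
    · have h := hkey p hNp
      have h2 : (p.factorial : ℝ)^(1/a) ≤ C' * (L^p * M p) := by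
        rw [hC'_def, div_mul_eq_mul_div, le_div_iff₀ hD]
        linarith
      calc (p.factorial : ℝ)^(1/a) ≤ C' * (L^p * M p) := h2
        _ ≤ (C' + S) * (L^p * M p) := by nlinarith
        _ = (C' + S) * L^p * M p := by ring
    · have hmem : p ∈ Finset.range N := Finset.mem_range.mpr hNp
      have hone : (p.factorial:ℝ)^(1/a) / (L^p * M p) ≤ S :=
        Finset.single_le_sum (f := fun q => (q.factorial:ℝ)^(1/a) / (L^q * M q))
          (fun q _ => div_nonneg (hFpos q).le (mul_pos (pow_pos hL q) (hpos q)).le) hmem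
      have h2 : (p.factorial:ℝ)^(1/a) ≤ S * (L^p * M p) := by
        rw [div_le_iff₀ hDp] at hone
        linarith
      calc (p.factorial : ℝ)^(1/a) ≤ S * (L^p * M p) := h2
        _ ≤ (C' + S) * (L^p * M p) := by nlinarith
        _ = (C' + S) * L^p * M p := by ring
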